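/- For a sequence σ of length n with values in ℕ, define inv(j) = {k : k < j and σ(k) > σ(j)}, and define R to be the set of indices j ∈ [0, n) such that there exists k < j with |[k, j) ∩ inv(j)| > (j - k)/2. Then |R| ≤ 2 · ed(σ), where ed(σ) is the edit distance to monotonicity of σ. -/

import Mathlib

/-- A sequence is non-decreasing on an index set `S`. -/
def MonoOn {n : ℕ} {α : Type*} [Preorder α] (σ : Fin n → α) (S : Finset (Fin n)) : Prop :=
  ∀ i ∈ S, ∀ j ∈ S, i ≤ j → σ i ≤ σ j

/-- Length of the longest non-decreasing subsequence. -/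
noncomputable def lisLen {n : ℕ} {α : Type*} [Preorder α] (σ : Fin n → α) : ℕ :=
  sSup {k | ∃ S : Finset (Fin n), S.card = k ∧ MonoOn σ S}

/-- Edit distance to monotonicity: minimum number of deletions leaving a
non-decreasing subsequence. -/
noncomputable def edDist {n : ℕ} {α : Type*} [Preorder α] (σ : Fin n → α) : ℕ :=
  sInf {k | ∃ S : Finset (Fin n), S.card = k ∧ MonoOn σ Sᶜ}

/-- Potential: walk going up on `c`-steps and (truncated) down otherwise. -/
def phiW (c : ℕ → Bool) : ℕ → ℕ
  | 0 => 0
  | j+1 => if c j then phiW c j + 1 else phiW c j - 1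

def cntW (c : ℕ → Bool) (k j : ℕ) : ℕ := ((Finset.Ico k j).filter (fun i => c i)).card

lemma lemA (c : ℕ → Bool) : ∀ j k, k ≤ j → 2 * cntW c k j ≤ phiW c j + (j - k) := by
  intro j
  induction j with
  | zero => intro k hk; interval_cases k; simp [cntW]
  | succ j ih =>
    intro k hk
    rcases Nat.lt_or_ge k (j+1) with h | h
    · have hkj : k ≤ j := Nat.lt_succ_iff.mp h
      have hins : Finset.Ico k (j+1) = insert j (Finset.Ico k j) := by
        ext m; simp only [Finset.mem_Ico, Finset.mem_insert]; omega
      have hcnt : cntW c k (j+1) = cntW c k j + (if c j then 1 else 0) := by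
        unfold cntW
        rw [hins, Finset.filter_insert]
        split
        · rw [Finset.card_insert_of_notMem (by simp)]
        · simp
      have := ih k hkj
      by_cases hcj : c j
      · simp only [phiW, hcnt, hcj, if_true]
        omega
      · simp only [Bool.not_eq_true] at hcj
        simp only [phiW, hcnt, hcj, Bool.false_eq_true, if_false]
        omega
    · have : k = j + 1 := le_antisymm hk h
      subst this; simp [cntW]

lemma lemB (c : ℕ → Bool) (N : ℕ) :
    ((Finset.range N).filter (fun j => ¬ c j ∧ 0 < phiW c j)).card + phiW c N
      = ((Finset.range N).filter (fun j => c j = true)).card := by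
  induction N with
  | zero => simp [phiW]
  | succ N ih =>
    rw [Finset.range_add_one, Finset.filter_insert, Finset.filter_insert]
    by_cases hc : c N
    · simp only [hc, if_true, not_true, false_and, if_false]
      rw [Finset.card_insert_of_notMem (by simp)]
      simp only [phiW, hc, if_true]
      omega
    · simp only [hc, if_false]
      simp only [Bool.not_eq_true] at hc
      simp only [hc, Bool.false_eq_true, if_false]
      have hphi : phiW c (N+1) = phiW c N - 1 := by
        simp [phiW, hc]
      by_cases hp : 0 < phiW c N
      · rw [if_pos (by simp [hc, hp]), Finset.card_insert_of_notMem (by simp), hphi]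
        omega
      · rw [if_neg (by simp [hp]), hphi]
        omega

theorem R_card_le_two_ed {n : ℕ} (σ : Fin n → ℕ) :
    (Finset.univ.filter (fun j : Fin n => ∃ k : Fin n, k < j ∧
        (j : ℕ) - (k : ℕ) <
          2 * ((Finset.Ico k j).filter (fun i => σ j < σ i)).card)).card
      ≤ 2 * edDist σ := by
  have hne : {k | ∃ S : Finset (Fin n), S.card = k ∧ MonoOn σ Sᶜ}.Nonempty := by
    refine ⟨(Finset.univ : Finset (Fin n)).card, Finset.univ, rfl, ?_⟩
    intro i hi; simp at hi
  obtain ⟨D, hDcard, hDmono⟩ := Nat.sInf_mem hne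
  set c : ℕ → Bool := fun m => decide (∃ h : m < n, (⟨m, h⟩ : Fin n) ∈ D) with hc
  set Rset := (Finset.univ.filter (fun j : Fin n => ∃ k : Fin n, k < j ∧
        (j : ℕ) - (k : ℕ) <
          2 * ((Finset.Ico k j).filter (fun i => σ j < σ i)).card)) with hR
  -- split R into R ∩ D and R \ D
  have hsplit : (Rset \ D).card + (Rset ∩ D).card = Rset.card :=
    Finset.card_sdiff_add_card_inter Rset D
  have h1 : (Rset ∩ D).card ≤ D.card := Finset.card_le_card Finset.inter_subset_right
  -- key: elements of R \ D map into "down-steps"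
  have hdown : (Rset \ D).card ≤
      ((Finset.range n).filter (fun j => ¬ c j ∧ 0 < phiW c j)).card := by
    rw [← Finset.card_image_of_injective (Rset \ D) Fin.val_injective]
    apply Finset.card_le_card
    intro m hm
    simp only [Finset.mem_image] at hm
    obtain ⟨j, hj, rfl⟩ := hm
    rw [Finset.mem_sdiff, hR, Finset.mem_filter] at hj
    obtain ⟨⟨-, k, hkj, hcard⟩, hjD⟩ := hj
    have hcj : ¬ c (j : ℕ) := by
      simp only [hc, decide_eq_true_eq, not_exists]
      intro h hmem
      exact hjD (by simpa using hmem)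
    -- inversions in [k,j) are all in D
    have hsub : (((Finset.Ico k j).filter (fun i => σ j < σ i)).image Fin.val)
        ⊆ (Finset.Ico (k : ℕ) (j : ℕ)).filter (fun i => c i) := by
      intro m hm
      simp only [Finset.mem_image, Finset.mem_filter, Finset.mem_Ico] at hm ⊢
      obtain ⟨i, ⟨hik, hinv⟩, rfl⟩ := hm
      have hik1 : (k : ℕ) ≤ (i : ℕ) := hik.1
      have hik2 : (i : ℕ) < (j : ℕ) := hik.2
      have hiD : i ∈ D := by
        by_contra hiD
        have := hDmono i (Finset.mem_compl.mpr hiD) j (Finset.mem_compl.mpr hjD)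
          (le_of_lt hik.2)
        omega
      refine ⟨⟨hik1, hik2⟩, ?_⟩
      simp only [hc, decide_eq_true_eq]
      exact ⟨i.isLt, by simpa using hiD⟩
    have hcnt : ((Finset.Ico k j).filter (fun i => σ j < σ i)).card ≤
        cntW c (k : ℕ) (j : ℕ) := by
      rw [← Finset.card_image_of_injective _ Fin.val_injective]
      exact Finset.card_le_card hsub
    have hA := lemA c (j : ℕ) (k : ℕ) (le_of_lt hkj)
    have hphi : 0 < phiW c (j : ℕ) := by omega
    simp only [Finset.mem_filter, Finset.mem_range]
    exact ⟨j.isLt, hcj, hphi⟩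
  -- down-steps ≤ up-steps ≤ |D|
  have hB := lemB c n
  have hup : ((Finset.range n).filter (fun j => c j = true)).card ≤ D.card := by
    calc ((Finset.range n).filter (fun j => c j = true)).card
        ≤ (D.image Fin.val).card := by
          apply Finset.card_le_card
          intro m hm
          simp only [Finset.mem_filter, Finset.mem_range, hc, decide_eq_true_eq] at hm
          obtain ⟨-, h, hmem⟩ := hm
          exact Finset.mem_image.mpr ⟨⟨m, h⟩, hmem, rfl⟩
      _ ≤ D.card := Finset.card_image_le
  have hd : edDist σ = D.card := hDcard.symm
  omega
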